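/- Let S = [[J_k(λ), a, C], [0, λ, bᵀ], [0, 0, J_k(λ)]] ∈ ℂ^{(2k+1)×(2k+1)}. Then there exist vectors y, z ∈ ℂ^k and a matrix W ∈ ℂ^{k×k} such that with Y = [[I_k, y, W], [0, 1, zᵀ], [0, 0, I_k]], the conjugate YSY⁻¹ has the form [[J_k(λ), ã, C̃], [0, λ, b̃ᵀ], [0, 0, J_k(λ)]] where ã = a_k e_k, b̃ = b₁ e₁, and all rows of C̃ except the last are zero. -/

import Mathlib

open Matrix
def jordanBlock (k : ℕ) (x : ℂ) : Matrix (Fin k) (Fin k) ℂ :=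
  Matrix.of fun i j => if i = j then x else if (i : ℕ) + 1 = (j : ℕ) then 1 else 0
def mkS (k : ℕ) (lam : ℂ) (a b : Fin k → ℂ) (C : Matrix (Fin k) (Fin k) ℂ) :
    Matrix (Fin k ⊕ (Fin 1 ⊕ Fin k)) (Fin k ⊕ (Fin 1 ⊕ Fin k)) ℂ :=
  Matrix.fromBlocks (jordanBlock k lam)
    (Matrix.of fun i j => Sum.elim (fun _ => a i) (fun j' => C i j') j)
    0
    (Matrix.fromBlocks (Matrix.of fun _ _ => lam) (Matrix.of fun _ j => b j)
      0 (jordanBlock k lam))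
def mkY (k : ℕ) (y z : Fin k → ℂ) (W : Matrix (Fin k) (Fin k) ℂ) :
    Matrix (Fin k ⊕ (Fin 1 ⊕ Fin k)) (Fin k ⊕ (Fin 1 ⊕ Fin k)) ℂ :=
  Matrix.fromBlocks 1
    (Matrix.of fun i j => Sum.elim (fun _ => y i) (fun j' => W i j') j)
    0
    (Matrix.fromBlocks 1 (Matrix.of fun _ j => z j) 0 1)

lemma mkS_eq (k : ℕ) (lam : ℂ) (a b : Fin k → ℂ) (C : Matrix (Fin k) (Fin k) ℂ) :
    mkS k lam a b C = Matrix.fromBlocks (jordanBlock k lam)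
      (fromCols (Matrix.of fun i _ => a i) C) 0
      (Matrix.fromBlocks (Matrix.of fun _ _ => lam) (Matrix.of fun _ j => b j)
        0 (jordanBlock k lam)) := rfl

lemma mkY_eq (k : ℕ) (y z : Fin k → ℂ) (W : Matrix (Fin k) (Fin k) ℂ) :
    mkY k y z W = Matrix.fromBlocks 1
      (fromCols (Matrix.of fun i _ => y i) W) 0
      (Matrix.fromBlocks 1 (Matrix.of fun _ j => z j) 0 1) := rfl

lemma fromColumns_add' {m n₁ n₂ : Type*} (A A' : Matrix m n₁ ℂ) (B B' : Matrix m n₂ ℂ) :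
    fromCols A B + fromCols A' B' = fromCols (A + A') (B + B') := by
  ext i (j | j) <;> simp [fromCols]

lemma mkY_mul (k : ℕ) (y z y' z' : Fin k → ℂ) (W W' : Matrix (Fin k) (Fin k) ℂ) :
    mkY k y z W * mkY k y' z' W' =
      mkY k (fun i => y i + y' i) (fun j => z j + z' j)
        (Matrix.of fun i j => W i j + W' i j + y i * z' j) := by
  rw [mkY_eq, mkY_eq, mkY_eq, fromBlocks_multiply]
  rw [fromBlocks_inj]
  refine ⟨by simp, ?_, by simp, ?_⟩
  · rw [fromCols_mul_fromBlocks]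
    simp only [Matrix.one_mul, Matrix.mul_one, Matrix.mul_zero, add_zero]
    rw [fromColumns_add', fromCols_inj.eq_iff]
    constructor
    · ext i j; simp [add_comm]
    · ext i j
      simp [mul_apply, Fin.sum_univ_one]
      ring
  · rw [fromBlocks_multiply]
    simp only [Matrix.zero_mul, zero_add, Matrix.one_mul, Matrix.mul_one,
      Matrix.mul_zero, add_zero]
    rw [fromBlocks_inj]
    refine ⟨by simp, ?_, by simp, by simp⟩
    ext i j
    simp [add_comm]

lemma mkY_zero (k : ℕ) : mkY k 0 0 0 = 1 := by
  rw [mkY_eq]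
  have h1 : (fromCols (Matrix.of fun (i : Fin k) (_ : Fin 1) => (0:ℂ)) (0 : Matrix (Fin k) (Fin k) ℂ)) = 0 := by
    ext i (j|j) <;> simp [fromCols]
  have h2 : Matrix.fromBlocks (1 : Matrix (Fin 1) (Fin 1) ℂ) (Matrix.of fun _ j => (0:ℂ)) 0 (1 : Matrix (Fin k) (Fin k) ℂ) = 1 := by
    have : (Matrix.of fun (_ : Fin 1) (j : Fin k) => (0:ℂ)) = 0 := by ext; simp
    rw [this, fromBlocks_one]
  simp only [Pi.zero_apply]
  rw [h1, h2, fromBlocks_one]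

lemma jordan_mul {m : Type*} (k : ℕ) (lam : ℂ) (X : Matrix (Fin k) m ℂ) (i : Fin k) (j : m) :
    (jordanBlock k lam * X) i j
      = lam * X i j + if h : (i : ℕ) + 1 < k then X ⟨(i:ℕ)+1, h⟩ j else 0 := by
  rw [mul_apply]
  have hsum : ∀ l : Fin k, jordanBlock k lam i l * X l j
      = (if l = i then lam * X i j else 0) + (if (l:ℕ) = (i:ℕ)+1 then X l j else 0) := by
    intro l
    simp only [jordanBlock, of_apply]
    rcases eq_or_ne i l with h | h
    · subst h; simp
    · have h1 : ¬ (l = i) := fun hh => h hh.symm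
      have h2 : ((i:ℕ)+1 = (l:ℕ)) ↔ ((l:ℕ) = (i:ℕ)+1) := eq_comm
      simp only [if_neg h, if_neg h1, zero_add]
      split_ifs with ha hb hb
      · simp
      · omega
      · omega
      · simp
  rw [Finset.sum_congr rfl (fun l _ => hsum l), Finset.sum_add_distrib]
  congr 1
  · simp
  · by_cases h : (i:ℕ)+1 < k
    · have : ∀ l : Fin k, ((l:ℕ) = (i:ℕ)+1) ↔ (l = ⟨(i:ℕ)+1, h⟩) := by
        intro l; simp [Fin.ext_iff]
      simp only [this]
      simp [h]
    · have : ∀ l : Fin k, ¬ ((l:ℕ) = (i:ℕ)+1) := by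
        intro l; have := l.isLt; omega
      simp [this, h]

lemma mul_jordan {m : Type*} (k : ℕ) (lam : ℂ) (X : Matrix m (Fin k) ℂ) (i : m) (j : Fin k) :
    (X * jordanBlock k lam) i j
      = lam * X i j + if h : 0 < (j:ℕ) then X i ⟨(j:ℕ)-1, by omega⟩ else 0 := by
  rw [mul_apply]
  have hsum : ∀ l : Fin k, X i l * jordanBlock k lam l j
      = (if l = j then lam * X i j else 0) + (if (l:ℕ)+1 = (j:ℕ) then X i l else 0) := by
    intro l
    simp only [jordanBlock, of_apply]
    rcases eq_or_ne l j with h | h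
    · subst h; simp [mul_comm]
    · simp only [if_neg h, zero_add]
      split_ifs with ha
      · simp [mul_comm]
      · simp
  rw [Finset.sum_congr rfl (fun l _ => hsum l), Finset.sum_add_distrib]
  congr 1
  · simp
  · by_cases h : 0 < (j:ℕ)
    · have : ∀ l : Fin k, ((l:ℕ)+1 = (j:ℕ)) ↔ (l = ⟨(j:ℕ)-1, by omega⟩) := by
        intro l; simp [Fin.ext_iff]; omega
      simp only [this]
      simp [h]
    · have : ∀ l : Fin k, ¬ ((l:ℕ)+1 = (j:ℕ)) := by intro l; omega
      simp [this, h]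

lemma key_gen (k : ℕ) (lam : ℂ) (a b at' bt y z : Fin k → ℂ)
    (C W Ct : Matrix (Fin k) (Fin k) ℂ)
    (h1 : ∀ i : Fin k, a i = (if h : (i:ℕ)+1 < k then y ⟨(i:ℕ)+1, h⟩ else 0) + at' i)
    (h2 : ∀ j : Fin k, bt j = b j + (if h : 0 < (j:ℕ) then z ⟨(j:ℕ)-1, by omega⟩ else 0))
    (h3 : ∀ i j : Fin k,
      C i j + y i * b j + (if h : 0 < (j:ℕ) then W i ⟨(j:ℕ)-1, by omega⟩ else 0)
        = (if h : (i:ℕ)+1 < k then W ⟨(i:ℕ)+1, h⟩ j else 0) + at' i * z j + Ct i j) :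
    mkY k y z W * mkS k lam a b C = mkS k lam at' bt Ct * mkY k y z W := by
  rw [mkY_eq, mkS_eq, mkS_eq]
  simp only [fromBlocks_multiply, fromCols_mul_fromBlocks, mul_fromCols,
    Matrix.one_mul, Matrix.mul_one, Matrix.mul_zero, Matrix.zero_mul, add_zero, zero_add]
  rw [fromBlocks_inj]
  refine ⟨rfl, ?_, by simp, ?_⟩
  · rw [fromColumns_add', fromColumns_add', fromCols_inj.eq_iff]
    constructor
    · ext i j
      have e1 : ((Matrix.of fun i (_ : Fin 1) => y i) * (Matrix.of fun (_ : Fin 1) (_ : Fin 1) => lam)) i j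
          = y i * lam := by simp [mul_apply]
      have e2 : (jordanBlock k lam * (Matrix.of fun i (_ : Fin 1) => y i)) i j
          = lam * y i + (if h : (i:ℕ)+1 < k then y ⟨(i:ℕ)+1, h⟩ else 0) := by
        rw [jordan_mul]; simp
      simp only [Matrix.add_apply, Matrix.of_apply, e1, e2]
      linear_combination h1 i
    · ext i j
      have e1 : (W * jordanBlock k lam) i j
          = lam * W i j + (if h : 0 < (j:ℕ) then W i ⟨(j:ℕ)-1, by omega⟩ else 0) :=
        mul_jordan k lam W i j
      have e2 : (jordanBlock k lam * W) i j
          = lam * W i j + (if h : (i:ℕ)+1 < k then W ⟨(i:ℕ)+1, h⟩ j else 0) :=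
        jordan_mul k lam W i j
      have e3 : ((Matrix.of fun i (_ : Fin 1) => y i) * (Matrix.of fun (_ : Fin 1) j => b j)) i j
          = y i * b j := by simp [mul_apply]
      have e4 : ((Matrix.of fun i (_ : Fin 1) => at' i) * (Matrix.of fun (_ : Fin 1) j => z j)) i j
          = at' i * z j := by simp [mul_apply]
      simp only [Matrix.add_apply, Matrix.of_apply, e1, e2, e3, e4]
      linear_combination h3 i j
  · rw [fromBlocks_inj]
    refine ⟨rfl, ?_, rfl, rfl⟩
    ext i j
    have e1 : ((Matrix.of fun (_ : Fin 1) j => z j) * jordanBlock k lam) i j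
        = lam * z j + (if h : 0 < (j:ℕ) then z ⟨(j:ℕ)-1, by omega⟩ else 0) := by
      rw [mul_jordan]; simp
    have e2 : ((Matrix.of fun (_ : Fin 1) (_ : Fin 1) => lam) * (Matrix.of fun (_ : Fin 1) j => z j)) i j
        = lam * z j := by simp [mul_apply]
    simp only [Matrix.add_apply, Matrix.of_apply, e1, e2]
    linear_combination -h2 j

lemma mkY_congr (k : ℕ) {y y' z z' : Fin k → ℂ} {W W' : Matrix (Fin k) (Fin k) ℂ}
    (hy : y = y') (hz : z = z') (hW : W = W') : mkY k y z W = mkY k y' z' W' := by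
  rw [hy, hz, hW]

/-- Auxiliary recursion building the strictly-lower-shift solution `W`. -/
def Wbuild (M : ℕ → ℕ → ℂ) : ℕ → ℕ → ℂ
  | 0, _ => 0
  | (i+1), j => M i j + (if j = 0 then 0 else Wbuild M i (j-1))

/-- `S` can be conjugated to the simplified form with `ã = a_k e_k`,
`b̃ = b₁ e₁`, and `C̃` in lower concentrated form (all rows but the last zero). -/
theorem odd_case_normal_form {k : ℕ} (hk : 0 < k)
    (lam : ℂ) (a b : Fin k → ℂ) (C : Matrix (Fin k) (Fin k) ℂ) :
    ∃ (y z : Fin k → ℂ) (W : Matrix (Fin k) (Fin k) ℂ)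
      (Ct : Matrix (Fin k) (Fin k) ℂ),
      (∀ i j : Fin k, (i : ℕ) + 1 < k → Ct i j = 0) ∧
      mkY k y z W * mkS k lam a b C * (mkY k y z W)⁻¹
        = mkS k lam
            (Pi.single (⟨k - 1, by omega⟩ : Fin k) (a ⟨k - 1, by omega⟩))
            (Pi.single (⟨0, hk⟩ : Fin k) (b ⟨0, hk⟩)) Ct := by
  obtain ⟨at', hat⟩ : ∃ at' : Fin k → ℂ,
      at' = Pi.single (⟨k - 1, by omega⟩ : Fin k) (a ⟨k - 1, by omega⟩) := ⟨_, rfl⟩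
  obtain ⟨bt, hbt⟩ : ∃ bt : Fin k → ℂ,
      bt = Pi.single (⟨0, hk⟩ : Fin k) (b ⟨0, hk⟩) := ⟨_, rfl⟩
  obtain ⟨y, hy⟩ : ∃ y : Fin k → ℂ,
      ∀ i : Fin k, y i = if h : 0 < (i:ℕ) then a ⟨(i:ℕ)-1, by omega⟩ else 0 :=
    ⟨_, fun _ => rfl⟩
  obtain ⟨z, hz⟩ : ∃ z : Fin k → ℂ,
      ∀ j : Fin k, z j = if h : (j:ℕ)+1 < k then -(b ⟨(j:ℕ)+1, h⟩) else 0 :=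
    ⟨_, fun _ => rfl⟩
  -- the matrix W solving the Sylvester-type recursion
  obtain ⟨Mn, hMn⟩ : ∃ Mn : ℕ → ℕ → ℂ,
      ∀ i j : Fin k, Mn i j = C i j + y i * b j - at' i * z j := by
    refine ⟨fun i j => if h : i < k ∧ j < k
      then C ⟨i, h.1⟩ ⟨j, h.2⟩ + y ⟨i, h.1⟩ * b ⟨j, h.2⟩ - at' ⟨i, h.1⟩ * z ⟨j, h.2⟩
      else 0, ?_⟩
    intro i j
    beta_reduce
    rw [dif_pos ⟨i.isLt, j.isLt⟩]
  obtain ⟨W, hW⟩ : ∃ W : Matrix (Fin k) (Fin k) ℂ,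
      ∀ (i j : Fin k) (h : (i:ℕ)+1 < k),
        W ⟨(i:ℕ)+1, h⟩ j = (C i j + y i * b j - at' i * z j)
          + (if h' : 0 < (j:ℕ) then W i ⟨(j:ℕ)-1, by omega⟩ else 0) := by
    refine ⟨Matrix.of fun i j => Wbuild Mn i j, ?_⟩
    intro i j h
    have e0 : (Matrix.of fun (i j : Fin k) => Wbuild Mn i j) (⟨(i:ℕ)+1, h⟩ : Fin k) j
        = Wbuild Mn ((i:ℕ)+1) (j:ℕ) := rfl
    have e1 : Wbuild Mn ((i:ℕ)+1) (j:ℕ)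
        = Mn i j + (if (j:ℕ) = 0 then 0 else Wbuild Mn i ((j:ℕ)-1)) := rfl
    rw [e0, e1, hMn i j]
    by_cases hj : 0 < (j:ℕ)
    · rw [if_neg (by omega), dif_pos hj]
      rfl
    · rw [if_pos (by omega), dif_neg hj]
  obtain ⟨Ct, hCt⟩ : ∃ Ct : Matrix (Fin k) (Fin k) ℂ,
      ∀ i j : Fin k, Ct i j = (C i j + y i * b j - at' i * z j)
          + (if h : 0 < (j:ℕ) then W i ⟨(j:ℕ)-1, by omega⟩ else 0)
          - (if h : (i:ℕ)+1 < k then W ⟨(i:ℕ)+1, h⟩ j else 0) :=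
    ⟨_, fun _ _ => rfl⟩
  refine ⟨y, z, W, Ct, ?_, ?_⟩
  · -- lower concentrated form
    intro i j h
    rw [hCt, dif_pos h, hW i j h]
    ring
  · -- the conjugation identity
    have h1 : ∀ i : Fin k, a i = (if h : (i:ℕ)+1 < k then y ⟨(i:ℕ)+1, h⟩ else 0) + at' i := by
      intro i
      by_cases h : (i:ℕ)+1 < k
      · rw [dif_pos h, hy, dif_pos (show 0 < (((⟨(i:ℕ)+1, h⟩ : Fin k)):ℕ) from Nat.succ_pos _)]
        have hi : (⟨((⟨(i:ℕ)+1, h⟩ : Fin k) : ℕ) - 1, by omega⟩ : Fin k) = i := by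
          apply Fin.ext; simp
        rw [hi, hat]
        rw [Pi.single_eq_of_ne (Fin.ne_of_val_ne (show (i:ℕ) ≠ k - 1 by omega))]
        ring
      · rw [dif_neg h, hat]
        have hi : i = (⟨k - 1, by omega⟩ : Fin k) := by
          apply Fin.ext; have := i.isLt; simp; omega
        rw [hi, Pi.single_eq_same]
        ring
    have h2 : ∀ j : Fin k, bt j = b j + (if h : 0 < (j:ℕ) then z ⟨(j:ℕ)-1, by omega⟩ else 0) := by
      intro j
      by_cases h : 0 < (j:ℕ)
      · rw [dif_pos h, hz, hbt]
        rw [Pi.single_eq_of_ne (Fin.ne_of_val_ne (show (j:ℕ) ≠ 0 by omega))]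
        rw [dif_pos (show ((⟨(j:ℕ)-1, by omega⟩ : Fin k):ℕ)+1 < k by simp; omega)]
        have hj : (⟨((⟨(j:ℕ)-1, by omega⟩ : Fin k):ℕ)+1, by have := j.isLt; simp; omega⟩ : Fin k) = j := by
          apply Fin.ext; simp; omega
        rw [hj]; ring
      · rw [dif_neg h, hbt]
        have hj : j = (⟨0, hk⟩ : Fin k) := by apply Fin.ext; simp; omega
        rw [hj, Pi.single_eq_same]
        ring
    have h3 : ∀ i j : Fin k,
        C i j + y i * b j + (if h : 0 < (j:ℕ) then W i ⟨(j:ℕ)-1, by omega⟩ else 0)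
          = (if h : (i:ℕ)+1 < k then W ⟨(i:ℕ)+1, h⟩ j else 0) + at' i * z j + Ct i j := by
      intro i j
      rw [hCt]
      ring
    have key := key_gen k lam a b at' bt y z C W Ct h1 h2 h3
    have hinv : mkY k y z W * mkY k (fun i => -y i) (fun j => -z j)
        (Matrix.of fun i j => y i * z j - W i j) = 1 := by
      rw [mkY_mul, ← mkY_zero k]
      apply mkY_congr
      · funext i; simp
      · funext j; simp
      · ext i j
        simp only [Matrix.of_apply, Matrix.zero_apply]
        ring
    rw [Matrix.inv_eq_right_inv hinv, key, Matrix.mul_assoc, hinv, Matrix.mul_one,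
      hat, hbt]
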